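/- Let n ≥ 1 and let (F, Σₙ, ⬠) be an (n+2)-angulated Krull–Schmidt category. Let f₀ : X₀ → X₁ be a morphism and let X be a minimal completion of f₀. Then X is a direct summand of any (n+2)-angle Y containing f₀ in position 0: there exist morphisms of (n+2)-angles φ : X → Y and ψ : Y → X, both equal to the identity in positions 0 and 1, such that ψ∘φ is an isomorphism of (n+2)-angles. Moreover, the minimal completion of f₀ is unique up to isomorphism of (n+2)-angles. -/

import Mathlib

open CategoryTheory CategoryTheory.Limits

universe v u

namespace NAng

instance (priority := 100) hasBinBiprod (C : Type u) [Category.{v} C] [Preadditive C]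
    [HasFiniteBiproducts C] : HasBinaryBiproducts C :=
  hasBinaryBiproducts_of_finite_biproducts C

variable {C : Type u} [Category.{v} C] [Preadditive C] [HasFiniteBiproducts C]

/-- A morphism `f : X ⟶ Y` lies in the radical if for every `g : Y ⟶ X` the
endomorphism `𝟙 X - f ≫ g` is invertible. -/
def InRad {X Y : C} (f : X ⟶ Y) : Prop :=
  ∀ g : Y ⟶ X, IsIso (𝟙 X - f ≫ g)

/-- A Krull–Schmidt category: every object is a finite direct sum of objects having
local endomorphism rings. -/
def KrullSchmidt (C : Type u) [Category.{v} C] [Preadditive C] [HasFiniteBiproducts C] : Prop :=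
  ∀ X : C, ∃ (k : ℕ) (Y : Fin k → C),
    Nonempty (X ≅ ⨁ Y) ∧ ∀ i, IsLocalRing (End (Y i))

/-- `Z ∈ add M`: `Z` is a retract of a finite direct sum of copies of `M`. -/
def InAdd (M Z : C) : Prop :=
  ∃ (k : ℕ) (ι : Z ⟶ ⨁ fun _ : Fin k => M) (π : (⨁ fun _ : Fin k => M) ⟶ Z),
    ι ≫ π = 𝟙 Z

variable (n : ℕ) (S : C ⥤ C)

/-- An "unrolled" candidate `(n+2)`-angle: an infinite complex which is
`(n+2)`-periodic up to `S` and the sign `(-1)ⁿ`.  The (n+2)-angle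
`X₀ → X₁ → ⋯ → X_{n+1} → S X₀` is recorded by the objects `X 0, …, X (n+1)`,
the maps `d 0, …, d n`, and the connecting morphism `d (n+1) ≫ (σ 0).hom`. -/
structure Cand where
  X : ℕ → C
  d : ∀ i, X i ⟶ X (i + 1)
  σ : ∀ i, X (n + 2 + i) ≅ S.obj (X i)
  compat : ∀ i, d (n + 2 + i) =
    (σ i).hom ≫ (((-1 : ℤ) ^ n) • S.map (d i)) ≫ (σ (i + 1)).inv

/-- A morphism of candidate `(n+2)`-angles. -/
structure CandHom (A B : Cand n S) where
  φ : ∀ i, A.X i ⟶ B.X i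
  comm : ∀ i, A.d i ≫ φ (i + 1) = φ i ≫ B.d i
  shift : ∀ i, φ (n + 2 + i) = (A.σ i).hom ≫ S.map (φ i) ≫ (B.σ i).inv

variable {n S}

/-- Rotation of a candidate `(n+2)`-angle. -/
def Cand.rot (A : Cand n S) : Cand n S where
  X i := A.X (i + 1)
  d i := A.d (i + 1)
  σ i := A.σ (i + 1)
  compat i := A.compat (i + 1)

/-- The connecting morphism `X_{n+1} ⟶ S X₀` of a candidate `(n+2)`-angle. -/
def Cand.conn (A : Cand n S) : A.X (n + 1) ⟶ S.obj (A.X 0) :=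
  A.d (n + 1) ≫ (A.σ 0).hom

variable (n S)

instance (priority := 100) preservesBinaryBiproductsOfAdditive {D : Type u} [Category.{v} D]
    [Preadditive D] (F : C ⥤ D) [F.Additive] : PreservesBinaryBiproducts F :=
  preservesBinaryBiproducts_of_preservesBiproducts F

/-- The differentials of the mapping cone of a morphism of candidate `(n+2)`-angles. -/
noncomputable def coneD {A B : Cand n S} (Φ : CandHom n S A B) (j : ℕ) :
    (A.X (j + 1)) ⊞ (B.X j) ⟶ (A.X (j + 2)) ⊞ (B.X (j + 1)) :=
  biprod.fst ≫ (-(A.d (j + 1))) ≫ biprod.inl +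
  biprod.fst ≫ Φ.φ (j + 1) ≫ biprod.inr +
  biprod.snd ≫ B.d j ≫ biprod.inr

/-- The periodicity isomorphisms of the mapping cone. -/
noncomputable def coneSigma [S.Additive] (A B : Cand n S) (j : ℕ) :
    (A.X (n + 2 + j + 1)) ⊞ (B.X (n + 2 + j)) ⟶ S.obj ((A.X (j + 1)) ⊞ (B.X j)) :=
  biprod.map (((-1 : ℤ) ^ n) • (A.σ (j + 1)).hom) ((B.σ j).hom) ≫
    (S.mapBiprod (A.X (j + 1)) (B.X j)).inv

/-- A pre-`(n+2)`-angulated structure: a class of `(n+2)`-angles satisfying the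
axioms (F1), (F2) and (F3) of Geiss–Keller–Oppermann. -/
structure PreAngulation where
  angles : Set (Cand n S)
  /-- (F1) closure under direct summands (hence under isomorphisms). -/
  retract_mem : ∀ {A B : Cand n S}, B ∈ angles →
    ∀ (ι : CandHom n S A B) (π : CandHom n S B A),
      (∀ i, ι.φ i ≫ π.φ i = 𝟙 (A.X i)) → A ∈ angles
  /-- (F1) closure under direct sums. -/
  sum_mem : ∀ {A B T : Cand n S}, A ∈ angles → B ∈ angles →
    ∀ (ιA : CandHom n S A T) (ιB : CandHom n S B T)
      (πA : CandHom n S T A) (πB : CandHom n S T B),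
      (∀ i, ιA.φ i ≫ πA.φ i = 𝟙 (A.X i)) →
      (∀ i, ιB.φ i ≫ πB.φ i = 𝟙 (B.X i)) →
      (∀ i, ιA.φ i ≫ πB.φ i = 0) →
      (∀ i, ιB.φ i ≫ πA.φ i = 0) →
      (∀ i, πA.φ i ≫ ιA.φ i + πB.φ i ≫ ιB.φ i = 𝟙 (T.X i)) →
      T ∈ angles
  /-- (F1) trivial `(n+2)`-angles belong to the class. -/
  triv_mem : ∀ T : Cand n S, IsIso (T.d 0) →
    (∀ j, 2 ≤ j → j ≤ n + 1 → IsZero (T.X j)) → T ∈ angles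
  /-- (F1) every morphism is the first morphism of some `(n+2)`-angle. -/
  complete : ∀ {X₀ X₁ : C} (f : X₀ ⟶ X₁),
    ∃ A ∈ angles, ∃ (e₀ : Cand.X A 0 ≅ X₀) (e₁ : Cand.X A 1 ≅ X₁),
      Cand.d A 0 = e₀.hom ≫ f ≫ e₁.inv
  /-- (F2) a candidate is an `(n+2)`-angle iff its rotation is. -/
  rot_mem : ∀ A : Cand n S, A ∈ angles ↔ A.rot ∈ angles
  /-- (F3) completion of commutative squares to morphisms of `(n+2)`-angles. -/
  ext_hom : ∀ {A B : Cand n S}, A ∈ angles → B ∈ angles →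
    ∀ (φ₀ : Cand.X A 0 ⟶ Cand.X B 0) (φ₁ : Cand.X A 1 ⟶ Cand.X B 1),
      Cand.d A 0 ≫ φ₁ = φ₀ ≫ Cand.d B 0 →
      ∃ Φ : CandHom n S A B, Φ.φ 0 = φ₀ ∧ Φ.φ 1 = φ₁

/-- An `(n+2)`-angulated structure: a pre-`(n+2)`-angulated structure satisfying
moreover the higher octahedral axiom, in the "good morphism"/mapping cone form of
Bergh–Thaule (equivalent to (F4) and to (N4*)). -/
structure Angulation [S.Additive] extends PreAngulation n S where
  octa : ∀ {A B : Cand n S}, A ∈ angles → B ∈ angles →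
    ∀ (φ₀ : Cand.X A 0 ⟶ Cand.X B 0) (φ₁ : Cand.X A 1 ⟶ Cand.X B 1),
      Cand.d A 0 ≫ φ₁ = φ₀ ≫ Cand.d B 0 →
      ∃ Φ : CandHom n S A B, Φ.φ 0 = φ₀ ∧ Φ.φ 1 = φ₁ ∧
        ∃ T ∈ angles, ∃ e : ∀ j, Cand.X T j ≅ (Cand.X A (j + 1)) ⊞ (Cand.X B j),
          (∀ j, Cand.d T j = (e j).hom ≫ coneD n S Φ j ≫ (e (j + 1)).inv) ∧
          (∀ j, (Cand.σ T j).hom =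
            (e (n + 2 + j)).hom ≫ coneSigma n S A B j ≫ S.map (e j).inv)

/-- A full subcategory (given by a predicate on objects) is additive if it contains
the zero objects and is closed under binary direct sums and direct summands. -/
def AddClosed (P : C → Prop) : Prop :=
  (∀ X : C, IsZero X → P X) ∧
  (∀ X Y : C, P X → P Y → P (X ⊞ Y)) ∧
  (∀ X Y : C, P Y → ∀ (i : X ⟶ Y) (r : Y ⟶ X), i ≫ r = 𝟙 X → P X)

/-- The subcategory `P` is `n`-extension closed with respect to the class `ang` of
`(n+2)`-angles. -/
def ExtClosed (P : C → Prop) (ang : Set (Cand n S)) : Prop :=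
  ∀ {A₀ Atop : C}, P A₀ → P Atop → ∀ f : Atop ⟶ S.obj A₀,
    ∃ W ∈ ang, ∃ (e₀ : Cand.X W 0 ≅ A₀) (etop : Cand.X W (n + 1) ≅ Atop),
      (∀ j, 1 ≤ j → j ≤ n → P (Cand.X W j)) ∧
      Cand.conn W = etop.hom ≫ f ≫ S.map e₀.inv

/-- The candidate `(n+2)`-angle `W` matches the finite complex `(X, d)` in
positions `0, …, n+1`. -/
def Matches (W : Cand n S) (X : ℕ → C) (d : ∀ i, X i ⟶ X (i + 1)) : Prop :=
  ∃ e : ∀ j, j ≤ n + 1 → (Cand.X W j ≅ X j),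
    ∀ j (h : j + 1 ≤ n + 1),
      Cand.d W j = (e j (Nat.le_of_succ_le h)).hom ≫ d j ≫ (e (j + 1) h).inv

/-- `(X, d)` is an `𝒜`-conflation: a complex with terms in `P` which can be
completed to an `(n+2)`-angle. -/
def IsConflation (P : C → Prop) (ang : Set (Cand n S))
    (X : ℕ → C) (d : ∀ i, X i ⟶ X (i + 1)) : Prop :=
  (∀ j, j ≤ n + 1 → P (X j)) ∧ ∃ W ∈ ang, Matches n S W X d

/-- An `𝒜`-inflation: a morphism in position `0` of some `𝒜`-conflation. -/
def IsInflation (P : C → Prop) (ang : Set (Cand n S)) {X₀ X₁ : C} (f : X₀ ⟶ X₁) : Prop :=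
  ∃ (X : ℕ → C) (d : ∀ i, X i ⟶ X (i + 1)), IsConflation n S P ang X d ∧
    ∃ (e₀ : X 0 ≅ X₀) (e₁ : X 1 ≅ X₁), d 0 = e₀.hom ≫ f ≫ e₁.inv

/-- An `𝒜`-deflation: a morphism in position `n` of some `𝒜`-conflation. -/
def IsDeflation (P : C → Prop) (ang : Set (Cand n S)) {Y₀ Y₁ : C} (f : Y₀ ⟶ Y₁) : Prop :=
  ∃ (X : ℕ → C) (d : ∀ i, X i ⟶ X (i + 1)), IsConflation n S P ang X d ∧
    ∃ (e₀ : X n ≅ Y₀) (e₁ : X (n + 1) ≅ Y₁), d n = e₀.hom ≫ f ≫ e₁.inv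

variable {n S}

end NAng

namespace NAng

variable {C : Type u} [Category.{v} C] [Preadditive C] [HasFiniteBiproducts C]

/-- `g` is a weak cokernel of `f` (in the ambient category). -/
def IsWeakCokernel {X Y Z : C} (f : X ⟶ Y) (g : Y ⟶ Z) : Prop :=
  f ≫ g = 0 ∧ ∀ (W : C) (h : Y ⟶ W), f ≫ h = 0 → ∃ k : Z ⟶ W, h = g ≫ k

/-- `f` is a weak kernel of `g` (in the ambient category). -/
def IsWeakKernel {X Y Z : C} (f : X ⟶ Y) (g : Y ⟶ Z) : Prop :=
  f ≫ g = 0 ∧ ∀ (W : C) (h : W ⟶ Y), h ≫ g = 0 → ∃ k : W ⟶ X, h = k ≫ f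

/-- `g` is a weak cokernel of `f` in the full subcategory `P`. -/
def WeakCokernelIn (P : C → Prop) {X Y Z : C} (f : X ⟶ Y) (g : Y ⟶ Z) : Prop :=
  f ≫ g = 0 ∧ ∀ (W : C), P W → ∀ h : Y ⟶ W, f ≫ h = 0 → ∃ k : Z ⟶ W, h = g ≫ k

/-- `f` is a weak kernel of `g` in the full subcategory `P`. -/
def WeakKernelIn (P : C → Prop) {X Y Z : C} (f : X ⟶ Y) (g : Y ⟶ Z) : Prop :=
  f ≫ g = 0 ∧ ∀ (W : C), P W → ∀ h : W ⟶ Y, h ≫ g = 0 → ∃ k : W ⟶ X, h = k ≫ f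

/-- `f` is a monomorphism in the full subcategory `P`. -/
def MonoIn (P : C → Prop) {X Y : C} (f : X ⟶ Y) : Prop :=
  ∀ (W : C), P W → ∀ a b : W ⟶ X, a ≫ f = b ≫ f → a = b

/-- `f` is an epimorphism in the full subcategory `P`. -/
def EpiIn (P : C → Prop) {X Y : C} (f : X ⟶ Y) : Prop :=
  ∀ (W : C), P W → ∀ a b : Y ⟶ W, f ≫ a = f ≫ b → a = b

variable (n : ℕ)

/-- `(X, d)` (positions `0, …, n+1`) is an `n`-exact sequence in the full additive
subcategory `P`. -/
def IsNExact (P : C → Prop) (X : ℕ → C) (d : ∀ i, X i ⟶ X (i + 1)) : Prop :=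
  (∀ j, j ≤ n + 1 → P (X j)) ∧
  MonoIn P (d 0) ∧ EpiIn P (d n) ∧
  (∀ i, i < n → WeakCokernelIn P (d i) (d (i + 1))) ∧
  (∀ i, i < n → WeakKernelIn P (d i) (d (i + 1)))

/-- An `n`-pushout diagram in the sense of Jasso, of the rows
`X 0 → ⋯ → X n` and `Y 0 → ⋯ → Y n` along the vertical morphisms `φ`. -/
def IsNPushout (P : C → Prop) (X : ℕ → C) (dX : ∀ i, X i ⟶ X (i + 1))
    (Y : ℕ → C) (dY : ∀ i, Y i ⟶ Y (i + 1)) (φ : ∀ k, X k ⟶ Y k) : Prop :=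
  (∀ k, k < n → dX k ≫ φ (k + 1) = φ k ≫ dY k) ∧
  ∃ (Q : ℕ → C) (dQ : ∀ i, Q i ⟶ Q (i + 1)) (α₀ : Q 0 ≅ X 0)
    (α : ∀ k, 1 ≤ k → k ≤ n → (Q k ≅ (X k) ⊞ (Y (k - 1)))) (αtop : Q (n + 1) ≅ Y n),
    (∀ h : 1 ≤ n,
      dQ 0 = α₀.hom ≫ biprod.lift (-(dX 0)) (φ 0) ≫ (α 1 le_rfl h).inv) ∧
    (∀ j, (h : j + 2 ≤ n) →
      dQ (j + 1) = (α (j + 1) (by omega) (by omega)).hom ≫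
        (biprod.fst ≫ (-(dX (j + 1))) ≫ biprod.inl +
         biprod.fst ≫ φ (j + 1) ≫ biprod.inr +
         biprod.snd ≫ dY j ≫ biprod.inr) ≫ (α (j + 2) (by omega) h).inv) ∧
    (∀ j, (h : j + 1 = n) →
      dQ (j + 1) = (α (j + 1) (by omega) (by omega)).hom ≫
        biprod.desc (φ (j + 1)) (dY j) ≫ eqToHom (by rw [h]) ≫ αtop.inv ≫
          eqToHom (by rw [h])) ∧
    (∀ k, k < n → WeakCokernelIn P (dQ k) (dQ (k + 1)))

/-- An `n`-pullback diagram in the sense of Jasso, of the rows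
`X 1 → ⋯ → X (n+1)` and `Y 1 → ⋯ → Y (n+1)` along the vertical morphisms `ψ`. -/
def IsNPullback (P : C → Prop) (X : ℕ → C) (dX : ∀ i, X i ⟶ X (i + 1))
    (Y : ℕ → C) (dY : ∀ i, Y i ⟶ Y (i + 1)) (ψ : ∀ k, Y k ⟶ X k) : Prop :=
  (∀ k, 1 ≤ k → k ≤ n → dY k ≫ ψ (k + 1) = ψ k ≫ dX k) ∧
  ∃ (Q : ℕ → C) (dQ : ∀ i, Q i ⟶ Q (i + 1)) (α₀ : Q 0 ≅ Y 1)
    (α : ∀ k, 1 ≤ k → k ≤ n → (Q k ≅ (Y (k + 1)) ⊞ (X k))) (αtop : Q (n + 1) ≅ X (n + 1)),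
    (∀ h : 1 ≤ n,
      dQ 0 = α₀.hom ≫ biprod.lift (-(dY 1)) (ψ 1) ≫ (α 1 le_rfl h).inv) ∧
    (∀ k, (h1 : 1 ≤ k) → (h : k + 1 ≤ n) →
      dQ k = (α k h1 (by omega)).hom ≫
        (biprod.fst ≫ (-(dY (k + 1))) ≫ biprod.inl +
         biprod.fst ≫ ψ (k + 1) ≫ biprod.inr +
         biprod.snd ≫ dX k ≫ biprod.inr) ≫ (α (k + 1) (by omega) h).inv) ∧
    (∀ h : 1 ≤ n,
      dQ n = (α n h le_rfl).hom ≫ biprod.desc (ψ (n + 1)) (dX n) ≫ αtop.inv) ∧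
    (∀ k, k < n → WeakKernelIn P (dQ k) (dQ (k + 1)))

end NAng

namespace NAng

section StatementSixAux

set_option linter.unreachableTactic false
set_option linter.unusedSectionVars false
set_option linter.unusedTactic false

open ZeroObject

variable {C : Type u} [Category.{v} C] [Preadditive C] [HasFiniteBiproducts C]

lemma isIso_one_add_swap {X Y : C} (f : X ⟶ Y) (g : Y ⟶ X) (h : IsIso (𝟙 X + f ≫ g)) :
    IsIso (𝟙 Y + g ≫ f) := by
  refine ⟨⟨𝟙 Y - g ≫ inv (𝟙 X + f ≫ g) ≫ f, ?_, ?_⟩⟩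
  · have key : inv (𝟙 X + f ≫ g) + f ≫ g ≫ inv (𝟙 X + f ≫ g) = 𝟙 X := by
      have h2 : (𝟙 X + f ≫ g) ≫ inv (𝟙 X + f ≫ g) = 𝟙 X := IsIso.hom_inv_id _
      rw [Preadditive.add_comp, Category.id_comp, Category.assoc] at h2
      exact h2
    calc (𝟙 Y + g ≫ f) ≫ (𝟙 Y - g ≫ inv (𝟙 X + f ≫ g) ≫ f)
        = 𝟙 Y + g ≫ f - g ≫ ((inv (𝟙 X + f ≫ g) + f ≫ g ≫ inv (𝟙 X + f ≫ g)) ≫ f) := by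
          simp only [Category.assoc, Category.id_comp,
            Category.comp_id, Preadditive.comp_add, Preadditive.add_comp,
            Preadditive.comp_sub, Preadditive.sub_comp]
          try abel
      _ = 𝟙 Y := by rw [key]; simp
  · have key : inv (𝟙 X + f ≫ g) + inv (𝟙 X + f ≫ g) ≫ f ≫ g = 𝟙 X := by
      have h2 : inv (𝟙 X + f ≫ g) ≫ (𝟙 X + f ≫ g) = 𝟙 X := IsIso.inv_hom_id _
      rw [Preadditive.comp_add, Category.comp_id] at h2
      exact h2
    calc (𝟙 Y - g ≫ inv (𝟙 X + f ≫ g) ≫ f) ≫ (𝟙 Y + g ≫ f)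
        = 𝟙 Y + g ≫ f - g ≫ ((inv (𝟙 X + f ≫ g) + inv (𝟙 X + f ≫ g) ≫ f ≫ g) ≫ f) := by
          simp only [Category.assoc, Category.id_comp,
            Category.comp_id, Preadditive.comp_add, Preadditive.add_comp,
            Preadditive.comp_sub, Preadditive.sub_comp]
          try abel
      _ = 𝟙 Y := by rw [key]; simp

lemma isIso_one_add_of_sq_zero {X : C} (α : X ⟶ X) (h : α ≫ α = 0) : IsIso (𝟙 X + α) := by
  refine ⟨⟨𝟙 X - α, ?_, ?_⟩⟩ <;>
    simp [Preadditive.comp_sub, Preadditive.sub_comp, Preadditive.add_comp,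
      Preadditive.comp_add, h, sub_add_eq_sub_sub] <;> try abel

lemma isIso_of_both {X Y : C} (f : X ⟶ Y) (g : Y ⟶ X) (h1 : IsIso (f ≫ g))
    (h2 : IsIso (g ≫ f)) : IsIso f := by
  have hfa : f ≫ (g ≫ inv (f ≫ g)) = 𝟙 X := by rw [← Category.assoc, IsIso.hom_inv_id]
  have hbf : (inv (g ≫ f) ≫ g) ≫ f = 𝟙 Y := by rw [Category.assoc, IsIso.inv_hom_id]
  have key : g ≫ inv (f ≫ g) = inv (g ≫ f) ≫ g := by
    calc g ≫ inv (f ≫ g)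
        = ((inv (g ≫ f) ≫ g) ≫ f) ≫ (g ≫ inv (f ≫ g)) := by rw [hbf, Category.id_comp]
      _ = (inv (g ≫ f) ≫ g) ≫ (f ≫ (g ≫ inv (f ≫ g))) := by simp only [Category.assoc]
      _ = inv (g ≫ f) ≫ g := by rw [hfa, Category.comp_id]
  refine ⟨⟨g ≫ inv (f ≫ g), hfa, ?_⟩⟩
  rw [key]
  exact hbf

/-- Composition of morphisms of candidate `(n+2)`-angles. -/
def CandHom.comp {n : ℕ} {S : C ⥤ C} {A B T : Cand n S} (Φ : CandHom n S A B)
    (Ψ : CandHom n S B T) : CandHom n S A T where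
  φ i := Φ.φ i ≫ Ψ.φ i
  comm i := by
    rw [← Category.assoc, Φ.comm i, Category.assoc, Ψ.comm i, ← Category.assoc]
  shift i := by
    show Φ.φ (n+2+i) ≫ Ψ.φ (n+2+i) = (A.σ i).hom ≫ S.map (Φ.φ i ≫ Ψ.φ i) ≫ (T.σ i).inv
    rw [Φ.shift i, Ψ.shift i]
    simp [Functor.map_comp]

variable (n : ℕ) (S : C ⥤ C) [S.Additive]

/-- Iterated application of the suspension functor. -/
noncomputable def objIter : ℕ → C → C
  | 0, W => W
  | k+1, W => S.obj (objIter k W)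

lemma isZero_objIter (k : ℕ) {W : C} (hW : IsZero W) : IsZero (objIter S k W) := by
  induction k with
  | zero => exact hW
  | succ k ih => exact S.map_isZero ih

/-- Base objects of the elementary "contractible" candidate. -/
noncomputable def pcBase (p : ℕ) (W : C) : ℕ → C := fun r =>
  if r = p then W else if r = p + 1 then W else 0

/-- Objects of the elementary candidate. -/
noncomputable def pcX (p : ℕ) (W : C) (i : ℕ) : C :=
  objIter S (i / (n+2)) (pcBase p W (i % (n+2)))

lemma pcX_shift (p : ℕ) (W : C) (i : ℕ) :
    pcX n S p W (n + 2 + i) = S.obj (pcX n S p W i) := by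
  unfold pcX
  rw [Nat.add_comm (n+2) i, Nat.add_div_right i (by omega), Nat.add_mod_right]
  rfl

lemma pc_mod_succ {p i : ℕ} (hp : p + 1 < n + 2) (h : i % (n+2) = p) :
    (i+1) % (n+2) = p + 1 := by
  have hd := Nat.div_add_mod i (n+2)
  rw [show i + 1 = (p+1) + (n+2) * (i / (n+2)) by omega, Nat.add_mul_mod_self_left]
  exact Nat.mod_eq_of_lt hp

lemma pc_div_succ {p i : ℕ} (hp : p + 1 < n + 2) (h : i % (n+2) = p) :
    (i+1) / (n+2) = i / (n+2) := by
  have hd := Nat.div_add_mod i (n+2)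
  rw [show i + 1 = (p+1) + (n+2) * (i / (n+2)) by omega,
    Nat.add_mul_div_left _ _ (by omega : 0 < n+2), Nat.div_eq_of_lt hp, Nat.zero_add]

lemma pcX_eq_of_lt (p : ℕ) (W : C) {j : ℕ} (hj : j < n + 2) :
    pcX n S p W j = pcBase p W j := by
  unfold pcX
  rw [Nat.div_eq_of_lt hj, Nat.mod_eq_of_lt hj]
  rfl

lemma pcX_succ_eq {p : ℕ} (W : C) {i : ℕ} (hp : p + 1 < n + 2) (h : i % (n+2) = p) :
    pcX n S p W i = pcX n S p W (i+1) := by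
  unfold pcX
  rw [pc_mod_succ n hp h, pc_div_succ n hp h, h]
  congr 1
  unfold pcBase
  rw [if_pos rfl, if_neg (by omega), if_pos rfl]

/-- Differentials of the elementary candidate. -/
noncomputable def pcD (p : ℕ) (hp : p + 1 < n + 2) (W : C) (i : ℕ) :
    pcX n S p W i ⟶ pcX n S p W (i+1) :=
  if h : i % (n+2) = p then
    ((-1 : ℤ) ^ (n * (i / (n+2)))) • eqToHom (pcX_succ_eq n S W hp h)
  else 0

/-- The elementary candidate: identity in positions `p, p+1` of the fundamental domain,
zero elsewhere. -/
noncomputable def pcCand (p : ℕ) (hp : p + 1 < n + 2) (W : C) : Cand n S where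
  X := pcX n S p W
  d := pcD n S p hp W
  σ i := eqToIso (pcX_shift n S p W i)
  compat i := by
    by_cases h : i % (n+2) = p
    · have h' : (n+2+i) % (n+2) = p := by rw [Nat.add_mod_left]; exact h
      have hdiv : (n+2+i) / (n+2) = i / (n+2) + 1 := by
        rw [Nat.add_comm (n+2) i]; exact Nat.add_div_right i (by omega)
      show pcD n S p hp W (n+2+i) = _ ≫ (((-1 : ℤ) ^ n) • S.map (pcD n S p hp W i)) ≫ _
      rw [pcD, pcD, dif_pos h, dif_pos h']
      rw [Functor.map_zsmul, eqToHom_map, eqToIso.hom, eqToIso.inv]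
      simp only [Preadditive.zsmul_comp, Preadditive.comp_zsmul, smul_smul,
        eqToHom_trans, eqToHom_trans_assoc]
      rw [hdiv]
      congr 1
      rw [Nat.mul_add, Nat.mul_one, pow_add]
      ring
    · have h' : ¬ ((n+2+i) % (n+2) = p) := by rw [Nat.add_mod_left]; exact h
      show pcD n S p hp W (n+2+i) = _ ≫ (((-1 : ℤ) ^ n) • S.map (pcD n S p hp W i)) ≫ _
      rw [pcD, pcD, dif_neg h, dif_neg h']
      simp

lemma pcBase_self (p : ℕ) (W : C) : pcBase p W p = W := by
  unfold pcBase; rw [if_pos rfl]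

lemma pcBase_succ (p : ℕ) (W : C) : pcBase p W (p+1) = W := by
  unfold pcBase; rw [if_neg (by omega), if_pos rfl]

lemma pcBase_zero (p : ℕ) (W : C) {r : ℕ} (h1 : r ≠ p) (h2 : r ≠ p + 1) :
    IsZero (pcBase p W r) := by
  unfold pcBase; rw [if_neg h1, if_neg h2]; exact isZero_zero C

lemma pc0_mem (P : PreAngulation n S) (W : C) :
    pcCand n S 0 (by omega) W ∈ P.angles := by
  apply P.triv_mem
  · show IsIso (pcD n S 0 (by omega) W 0)
    rw [pcD, dif_pos (by simp)]
    rw [Nat.zero_div, Nat.mul_zero, pow_zero, one_smul]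
    infer_instance
  · intro j h2 hj
    show IsZero (pcX n S 0 W j)
    rw [pcX_eq_of_lt n S 0 W (by omega)]
    exact pcBase_zero 0 W (by omega) (by omega)

lemma pc1_mem (P : PreAngulation n S) (hn : 1 ≤ n) (W : C) :
    pcCand n S 1 (by omega) W ∈ P.angles := by
  rw [P.rot_mem]
  apply P.triv_mem
  · show IsIso (pcD n S 1 (by omega) W 1)
    rw [pcD, dif_pos (by rw [Nat.mod_eq_of_lt (by omega)])]
    rw [Nat.div_eq_of_lt (by omega), Nat.mul_zero, pow_zero, one_smul]
    infer_instance
  · intro j h2 hj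
    show IsZero (pcX n S 1 W (j+1))
    by_cases hc : j + 1 < n + 2
    · rw [pcX_eq_of_lt n S 1 W hc]
      exact pcBase_zero 1 W (by omega) (by omega)
    · have hj2 : j + 1 = n + 2 + 0 := by omega
      rw [hj2, pcX_shift]
      apply S.map_isZero
      rw [pcX_eq_of_lt n S 1 W (by omega)]
      exact pcBase_zero 1 W (by omega) (by omega)

lemma comp_zero_of_eqToHom_comp {X Y Z : C} (e : X = Y) (f : Y ⟶ Z)
    (h : eqToHom e ≫ f = 0) : f = 0 := by
  calc f = eqToHom e.symm ≫ (eqToHom e ≫ f) := by rw [eqToHom_trans_assoc, eqToHom_refl,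
          Category.id_comp]
    _ = 0 := by rw [h, comp_zero]

lemma d_comp_d (P : PreAngulation n S) :
    ∀ (j : ℕ) {A : Cand n S}, A ∈ P.angles → A.d j ≫ A.d (j+1) = 0 := by
  intro j
  induction j with
  | zero =>
    intro A hA
    set W := A.X 0 with hW
    have hT : pcCand n S 0 (by omega) W ∈ P.angles := pc0_mem n S P W
    set T := pcCand n S 0 (by omega) W with hTdef
    have e0 : T.X 0 = W := by
      show pcX n S 0 W 0 = W
      rw [pcX_eq_of_lt n S 0 W (by omega), pcBase_self]
    have e1 : T.X 1 = W := by
      show pcX n S 0 W 1 = W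
      rw [pcX_eq_of_lt n S 0 W (by omega)]
      exact pcBase_succ 0 W
    have hTd0 : T.d 0 = eqToHom (e0.trans e1.symm) := by
      show pcD n S 0 (by omega) W 0 = _
      rw [pcD, dif_pos (by simp), Nat.zero_div, Nat.mul_zero, pow_zero, one_smul]
      rfl
    have hTd1 : T.d 1 = 0 := by
      show pcD n S 0 (by omega) W 1 = 0
      rw [pcD, dif_neg (by rw [Nat.mod_eq_of_lt (by omega)]; omega)]
    have sq : T.d 0 ≫ (eqToHom e1 ≫ A.d 0) = eqToHom e0 ≫ A.d 0 := by
      rw [hTd0]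
      try rw [eqToHom_trans_assoc]
    obtain ⟨Φ, h0, h1⟩ := P.ext_hom hT hA (eqToHom e0) (eqToHom e1 ≫ A.d 0) sq
    have hc := Φ.comm 1
    rw [h1, hTd1, zero_comp] at hc
    have : eqToHom e1 ≫ A.d 0 ≫ A.d 1 = 0 := by
      rw [← Category.assoc]; exact hc.symm
    exact comp_zero_of_eqToHom_comp e1 _ this
  | succ j ih =>
    intro A hA
    exact ih ((P.rot_mem A).mp hA)

lemma weak_cok (P : PreAngulation n S) (hn : 1 ≤ n) :
    ∀ (j : ℕ) {A : Cand n S}, A ∈ P.angles → ∀ {W : C} (h : A.X (j+1) ⟶ W),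
      A.d j ≫ h = 0 → ∃ k : A.X (j+2) ⟶ W, h = A.d (j+1) ≫ k := by
  intro j
  induction j with
  | zero =>
    intro A hA W h hz
    have hB : pcCand n S 1 (by omega) W ∈ P.angles := pc1_mem n S P hn W
    set B := pcCand n S 1 (by omega) W with hBdef
    have e1 : B.X 1 = W := by
      show pcX n S 1 W 1 = W
      rw [pcX_eq_of_lt n S 1 W (by omega), pcBase_self]
    have e2 : B.X 2 = W := by
      show pcX n S 1 W 2 = W
      rw [pcX_eq_of_lt n S 1 W (by omega)]
      exact pcBase_succ 1 W
    have hBd1 : B.d 1 = eqToHom (e1.trans e2.symm) := by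
      show pcD n S 1 (by omega) W 1 = _
      rw [pcD, dif_pos (by rw [Nat.mod_eq_of_lt (by omega)]),
        Nat.div_eq_of_lt (by omega), Nat.mul_zero, pow_zero, one_smul]
      rfl
    have sq : A.d 0 ≫ (h ≫ eqToHom e1.symm) = 0 ≫ B.d 0 := by
      rw [← Category.assoc, hz]
      try rw [zero_comp]
      try rw [zero_comp]
    obtain ⟨Φ, h0, h1⟩ := P.ext_hom hA hB 0 (h ≫ eqToHom e1.symm) sq
    have hc := Φ.comm 1
    rw [h1, hBd1] at hc
    refine ⟨Φ.φ 2 ≫ eqToHom e2, ?_⟩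
    rw [← Category.assoc, hc]
    simp [eqToHom_trans]
  | succ j ih =>
    intro A hA W h hz
    exact ih ((P.rot_mem A).mp hA) h hz

/-- An endomorphism of a minimal completion which is the identity in positions `0`
and `1` is an isomorphism in every position. -/
lemma endo_iso (P : PreAngulation n S) (hn : 1 ≤ n) {M : Cand n S} (hM : M ∈ P.angles)
    (hmin : ∀ j, 2 ≤ j → j ≤ n → InRad (M.d j))
    (θ : CandHom n S M M) (h0 : θ.φ 0 = 𝟙 (M.X 0)) (h1 : θ.φ 1 = 𝟙 (M.X 1)) :
    ∀ j, IsIso (θ.φ j) := by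
  have key : ∀ j, 2 ≤ j → j ≤ n + 1 → ∃ (u : M.X j ⟶ M.X j) (k : M.X (j+1) ⟶ M.X j),
      IsIso u ∧ u ≫ M.d j = M.d j ∧ θ.φ j = u + M.d j ≫ k := by
    intro j
    induction j with
    | zero => omega
    | succ j ih =>
      intro h2 hj
      rcases Nat.lt_or_ge j 2 with hj2 | hj2
      · have hj1 : j = 1 := by omega
        subst hj1
        have hc := θ.comm 1
        rw [h1, Category.id_comp] at hc
        have hz : M.d 1 ≫ (θ.φ 2 - 𝟙 (M.X 2)) = 0 := by
          rw [Preadditive.comp_sub, hc, Category.comp_id, sub_self]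
        obtain ⟨k, hk⟩ := weak_cok n S P hn 1 hM _ hz
        refine ⟨𝟙 (M.X 2), k, inferInstance, Category.id_comp _, ?_⟩
        rw [← hk]
        abel
      · obtain ⟨u, k, hu, hud, hθ⟩ := ih hj2 (by omega)
        have hc := θ.comm j
        have hz : M.d j ≫ (θ.φ (j+1) - (𝟙 (M.X (j+1)) + k ≫ M.d j)) = 0 := by
          rw [Preadditive.comp_sub, hc, hθ, Preadditive.add_comp, hud,
            Preadditive.comp_add, Category.comp_id]
          simp only [Category.assoc]
          abel
        obtain ⟨k', hk'⟩ := weak_cok n S P hn j hM _ hz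
        refine ⟨𝟙 (M.X (j+1)) + k ≫ M.d j, k', ?_, ?_, ?_⟩
        · have hrad := hmin j hj2 (by omega)
          have h1' : IsIso (𝟙 (M.X j) + M.d j ≫ k) := by
            simpa [sub_neg_eq_add] using hrad (-k)
          exact isIso_one_add_swap (M.d j) k h1'
        · rw [Preadditive.add_comp, Category.id_comp, Category.assoc,
            d_comp_d n S P j hM, comp_zero, add_zero]
        · rw [← hk']
          abel
  have main : ∀ j, j ≤ n + 1 → IsIso (θ.φ j) := by
    intro j hj
    match j, hj with
    | 0, _ => rw [h0]; infer_instance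
    | 1, _ => rw [h1]; infer_instance
    | (j+2), hj =>
      obtain ⟨u, k, hu, hud, hθ⟩ := key (j+2) (by omega) hj
      have hrw : θ.φ (j+2) = u ≫ (𝟙 (M.X (j+2)) + M.d (j+2) ≫ k) := by
        rw [hθ, Preadditive.comp_add, Category.comp_id, ← Category.assoc, hud]
      rw [hrw]
      by_cases hcase : j + 2 ≤ n
      · have : IsIso (𝟙 (M.X (j+2)) + M.d (j+2) ≫ k) := by
          simpa [sub_neg_eq_add] using hmin (j+2) (by omega) hcase (-k)
        infer_instance
      · have hsh' : θ.φ (j+2+1) = 𝟙 (M.X (j+2+1)) := by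
          rw [show j + 2 + 1 = n + 2 + 0 by omega]
          rw [θ.shift 0, h0, S.map_id, Category.id_comp, Iso.hom_inv_id]
        have hc : θ.φ (j+2) ≫ M.d (j+2) = M.d (j+2) := by
          have h := θ.comm (j+2)
          rw [hsh', Category.comp_id] at h
          exact h.symm
        have hα : (M.d (j+2) ≫ k) ≫ M.d (j+2) = 0 := by
          have h2 : M.d (j+2) + (M.d (j+2) ≫ k) ≫ M.d (j+2) = M.d (j+2) := by
            calc M.d (j+2) + (M.d (j+2) ≫ k) ≫ M.d (j+2)
                = (u + M.d (j+2) ≫ k) ≫ M.d (j+2) := by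
                  rw [Preadditive.add_comp, hud]
              _ = M.d (j+2) := by rw [← hθ]; exact hc
          rwa [add_eq_left] at h2
        have hsq : (M.d (j+2) ≫ k) ≫ (M.d (j+2) ≫ k) = 0 := by
          rw [← Category.assoc, hα, zero_comp]
        have : IsIso (𝟙 (M.X (j+2)) + M.d (j+2) ≫ k) := isIso_one_add_of_sq_zero _ hsq
        infer_instance
  intro j
  induction j using Nat.strong_induction_on with
  | _ j ih =>
    rcases Nat.lt_or_ge j (n+2) with hlt | hge
    · exact main j (by omega)
    · obtain ⟨i, rfl⟩ : ∃ i, j = n + 2 + i := ⟨j - (n+2), by omega⟩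
      rw [θ.shift i]
      have := ih i (by omega)
      infer_instance

end StatementSixAux


/-- In an `(n+2)`-angulated Krull–Schmidt category, a minimal
completion `M` of a morphism `f₀ : X₀ ⟶ X₁` is a direct summand of every
`(n+2)`-angle `Y` containing `f₀` in position `0`, via morphisms of `(n+2)`-angles
which are the identity (i.e. the canonical comparison isomorphisms) in positions `0`
and `1` and whose composite is an isomorphism.  Moreover the minimal completion of
`f₀` is unique up to isomorphism of `(n+2)`-angles. -/
theorem statement_6 {C : Type u} [Category.{v} C] [Preadditive C] [HasFiniteBiproducts C]
    (n : ℕ) (hn : 1 ≤ n) (e : C ≌ C) [e.functor.Additive]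
    (ANG : Angulation n e.functor) (hKS : KrullSchmidt C)
    {X₀ X₁ : C} (f₀ : X₀ ⟶ X₁)
    (M : Cand n e.functor) (hM : M ∈ ANG.angles)
    (m₀ : M.X 0 ≅ X₀) (m₁ : M.X 1 ≅ X₁)
    (hMd : M.d 0 = m₀.hom ≫ f₀ ≫ m₁.inv)
    (hMmin : ∀ j, 2 ≤ j → j ≤ n → InRad (M.d j)) :
    (∀ Y : Cand n e.functor, Y ∈ ANG.angles →
      ∀ (y₀ : Cand.X Y 0 ≅ X₀) (y₁ : Cand.X Y 1 ≅ X₁),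
        Cand.d Y 0 = y₀.hom ≫ f₀ ≫ y₁.inv →
        ∃ (Φ : CandHom n e.functor M Y) (Ψ : CandHom n e.functor Y M),
          Φ.φ 0 = m₀.hom ≫ y₀.inv ∧ Φ.φ 1 = m₁.hom ≫ y₁.inv ∧
          Ψ.φ 0 = y₀.hom ≫ m₀.inv ∧ Ψ.φ 1 = y₁.hom ≫ m₁.inv ∧
          (∀ j, IsIso (Φ.φ j ≫ Ψ.φ j))) ∧
    (∀ M' : Cand n e.functor, M' ∈ ANG.angles →
      ∀ (m'₀ : Cand.X M' 0 ≅ X₀) (m'₁ : Cand.X M' 1 ≅ X₁),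
        Cand.d M' 0 = m'₀.hom ≫ f₀ ≫ m'₁.inv →
        (∀ j, 2 ≤ j → j ≤ n → InRad (Cand.d M' j)) →
        ∃ Φ : CandHom n e.functor M M', ∀ j, IsIso (Φ.φ j)) := by
  constructor
  · intro Y hY y₀ y₁ hYd
    obtain ⟨Φ, hΦ0, hΦ1⟩ := ANG.ext_hom hM hY (m₀.hom ≫ y₀.inv) (m₁.hom ≫ y₁.inv)
      (by rw [hMd, hYd]; simp)
    obtain ⟨Ψ, hΨ0, hΨ1⟩ := ANG.ext_hom hY hM (y₀.hom ≫ m₀.inv) (y₁.hom ≫ m₁.inv)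
      (by rw [hMd, hYd]; simp)
    refine ⟨Φ, Ψ, hΦ0, hΦ1, hΨ0, hΨ1, ?_⟩
    have hiso := endo_iso n e.functor ANG.toPreAngulation hn hM hMmin (Φ.comp Ψ)
      (by show Φ.φ 0 ≫ Ψ.φ 0 = _; rw [hΦ0, hΨ0]; simp)
      (by show Φ.φ 1 ≫ Ψ.φ 1 = _; rw [hΦ1, hΨ1]; simp)
    exact hiso
  · intro M' hM' m'₀ m'₁ hM'd hM'min
    obtain ⟨Φ, hΦ0, hΦ1⟩ := ANG.ext_hom hM hM' (m₀.hom ≫ m'₀.inv) (m₁.hom ≫ m'₁.inv)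
      (by rw [hMd, hM'd]; simp)
    obtain ⟨Ψ, hΨ0, hΨ1⟩ := ANG.ext_hom hM' hM (m'₀.hom ≫ m₀.inv) (m'₁.hom ≫ m₁.inv)
      (by rw [hMd, hM'd]; simp)
    have hiso1 := endo_iso n e.functor ANG.toPreAngulation hn hM hMmin (Φ.comp Ψ)
      (by show Φ.φ 0 ≫ Ψ.φ 0 = _; rw [hΦ0, hΨ0]; simp)
      (by show Φ.φ 1 ≫ Ψ.φ 1 = _; rw [hΦ1, hΨ1]; simp)
    have hiso2 := endo_iso n e.functor ANG.toPreAngulation hn hM' hM'min (Ψ.comp Φ)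
      (by show Ψ.φ 0 ≫ Φ.φ 0 = _; rw [hΦ0, hΨ0]; simp)
      (by show Ψ.φ 1 ≫ Φ.φ 1 = _; rw [hΦ1, hΨ1]; simp)
    exact ⟨Φ, fun j => isIso_of_both _ _ (hiso1 j) (hiso2 j)⟩

end NAng
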